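/- Let δ ∈ (0,1] and let (X,Y) be a pair of {0,1}-valued random variables with joint probabilities P_{ij} = Pr[X=i, Y=j]. Then ((1+δ)/2)(H(X) + H(Y)) − H(X,Y) − log₂(δ)·Pr[X ≠ Y] + log₂(1+δ) − δ ≥ 0, where H denotes binary (base-2) Shannon entropy, provided the joint distribution arises from correlated sets, i.e., P_{ij} = α_i β_j γ_{ij} for some nonnegative α, β and γ_{ij} ∈ {1, δ} with γ_{00}=γ_{11}=1 and γ_{01}=γ_{10}=δ (equivalently P_{00}P_{11}/(P_{01}P_{10}) has the appropriate form); in particular, the inequality holds whenever either all four P_{ij} are positive, or the zeros of the matrix (P_{ij}) occur only as full rows/columns. -/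

import Mathlib

open Finset Real

/-- One term of base-2 Shannon entropy, with the convention `0 · log 0 = 0`. -/
noncomputable def ent (p : ℝ) : ℝ := -(p * Real.logb 2 p)

-- Tangent bound for concave rpow: for 0<w≤y, s∈[0,1]: y^s ≤ w^s + s*w^(s-1)*(y-w)
lemma tangent_rpow {w y s : ℝ} (hw : 0 < w) (hwy : w ≤ y) (hs0 : 0 ≤ s) (hs1 : s ≤ 1) :
    y ^ s ≤ w ^ s + s * w ^ (s - 1) * (y - w) := by
  have hb : (1 + (y / w - 1)) ^ s ≤ 1 + s * (y / w - 1) :=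
    rpow_one_add_le_one_add_mul_self (by nlinarith [div_nonneg (hw.le.trans hwy) hw.le]) hs0 hs1
  have hyw : (1 : ℝ) + (y / w - 1) = y / w := by ring
  rw [hyw] at hb
  have hdiv : (y / w) ^ s = y ^ s / w ^ s := Real.div_rpow (hw.le.trans hwy) hw.le s
  rw [hdiv] at hb
  have hwpow : 0 < w ^ s := rpow_pos_of_pos hw s
  have h2 := mul_le_mul_of_nonneg_right hb hwpow.le
  rw [div_mul_cancel₀ _ hwpow.ne'] at h2
  calc y ^ s ≤ (1 + s * (y / w - 1)) * w ^ s := h2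
    _ = w ^ s + s * (w ^ s / w) * (y - w) := by field_simp
    _ = w ^ s + s * w ^ (s - 1) * (y - w) := by rw [← Real.rpow_sub_one hw.ne']

lemma hh_rpow {γ : ℝ} (hγ1 : 1 ≤ γ) (hγ2 : γ ≤ 2) {y : ℝ} (hy : 1 ≤ y) :
    y ^ γ ≤ 1 + γ * (y - 1) * ((y + 1) / 2) ^ (γ - 1) := by
  set m : ℝ → ℝ := fun t => 1 + γ * (t - 1) * ((t + 1) / 2) ^ (γ - 1) - t ^ γ with hm
  have key : MonotoneOn m (Set.Ici 1) := by
    have hderiv : ∀ t : ℝ, 1 < t → HasDerivAt m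
        (γ * ((t + 1) / 2) ^ (γ - 1)
          + γ * (t - 1) * ((γ - 1) * ((t + 1) / 2) ^ (γ - 1 - 1) * (1 / 2))
          - γ * t ^ (γ - 1)) t := by
      intro t ht
      have hbase : (0:ℝ) < (t + 1) / 2 := by linarith
      have h1 : HasDerivAt (fun u : ℝ => (u + 1) / 2) (1 / 2) t := by
        simpa using ((hasDerivAt_id t).add_const 1).div_const 2
      have h2 : HasDerivAt (fun u : ℝ => ((u + 1) / 2) ^ (γ - 1))
          ((γ - 1) * ((t + 1) / 2) ^ (γ - 1 - 1) * (1 / 2)) t := by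
        have := h1.rpow_const (p := γ - 1) (Or.inl hbase.ne')
        convert this using 1
        ring
      have h3 : HasDerivAt (fun u : ℝ => γ * (u - 1)) γ t := by
        simpa using ((hasDerivAt_id t).sub_const 1).const_mul γ
      have h4 : HasDerivAt (fun u : ℝ => u ^ γ) (γ * t ^ (γ - 1)) t := by
        simpa using (hasDerivAt_id t).rpow_const (Or.inl (by positivity : t ≠ 0))
      have h5 := ((h3.mul h2).const_add 1).sub h4
      exact h5
    apply monotoneOn_of_deriv_nonneg (convex_Ici 1)
    · -- continuity
      have hc1 : ContinuousOn (fun t : ℝ => ((t + 1) / 2) ^ (γ - 1)) (Set.Ici 1) := by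
        apply ContinuousOn.rpow_const (by fun_prop)
        intro t ht
        have : (1:ℝ) ≤ t := ht
        exact Or.inl (by positivity)
      have hc2 : ContinuousOn (fun t : ℝ => t ^ γ) (Set.Ici 1) := by
        apply ContinuousOn.rpow_const (by fun_prop)
        intro t ht
        have : (1:ℝ) ≤ t := ht
        exact Or.inl (by positivity)
      exact (continuousOn_const.add ((continuousOn_const.mul (by fun_prop)).mul hc1)).sub hc2
    · intro t ht
      rw [interior_Ici] at ht
      exact ((hderiv t ht).differentiableAt).differentiableWithinAt
    · intro t ht
      rw [interior_Ici] at ht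
      replace ht : 1 < t := ht
      rw [(hderiv t ht).deriv]
      -- use tangent bound: t^(γ-1) ≤ w^(γ-1) + (γ-1) w^(γ-2) (t-w), w=(t+1)/2
      have hw : (0:ℝ) < (t + 1) / 2 := by linarith
      have htan := tangent_rpow hw (by linarith : (t+1)/2 ≤ t) (by linarith : (0:ℝ) ≤ γ - 1)
        (by linarith : γ - 1 ≤ 1)
      have ht2 : t - (t + 1) / 2 = (t - 1) / 2 := by ring
      rw [ht2] at htan
      have hγ0 : (0:ℝ) ≤ γ := by linarith
      nlinarith [mul_le_mul_of_nonneg_left htan hγ0]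
  have h1 : m 1 ≤ m y := key (by norm_num) hy hy
  have hm1 : m 1 = 0 := by simp [hm, Real.one_rpow]
  have : 0 ≤ m y := hm1 ▸ h1
  simp only [hm] at this
  linarith

lemma sinh_bound {γ : ℝ} (hγ1 : 1 ≤ γ) (hγ2 : γ ≤ 2) {u : ℝ} (hu : 0 ≤ u) :
    Real.sinh (γ * u) ≤ γ * Real.sinh u * Real.cosh u ^ (γ - 1) := by
  set E := Real.exp u with hE
  set F := Real.exp (-u) with hF
  set G := Real.exp (γ * u) with hG
  set G' := Real.exp (-(γ * u)) with hG'
  set K := Real.cosh u ^ (γ - 1) with hK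
  have hEF : E * F = 1 := by rw [hE, hF, ← Real.exp_add]; simp
  have hGG' : G * G' = 1 := by rw [hG, hG', ← Real.exp_add]; simp
  have hY : (1:ℝ) ≤ E * E := by nlinarith [Real.one_le_exp hu]
  have hC := hh_rpow hγ1 hγ2 hY
  -- identities
  have hYg : (E * E) ^ γ = G * G := by
    rw [hE, hG, ← Real.exp_add, ← Real.exp_add, ← Real.exp_mul]
    ring_nf
  have hEEC : (E * E + 1) / 2 = E * Real.cosh u := by
    rw [hE, Real.cosh_eq, ← hE, ← hF]
    have : E * F = 1 := hEF
    field_simp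
    nlinarith [this]
  have hsplit : ((E * E + 1) / 2) ^ (γ - 1) = Real.exp ((γ - 1) * u) * K := by
    rw [hEEC, Real.mul_rpow (Real.exp_pos u).le (Real.cosh_pos u).le, hK, ← Real.exp_mul]
    ring_nf
  have hWG' : Real.exp ((γ - 1) * u) * G' = F := by
    rw [hG', hF, ← Real.exp_add]
    ring_nf
  rw [hYg, hsplit] at hC
  have hG'pos : (0:ℝ) < G' := Real.exp_pos _
  have h6 := mul_le_mul_of_nonneg_right hC hG'pos.le
  have e1 : G * G * G' = G := by rw [mul_assoc, hGG', mul_one]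
  have e2 : (1 + γ * (E * E - 1) * (Real.exp ((γ - 1) * u) * K)) * G' = G' + γ * (E - F) * K := by
    have h3 : (E * E - 1) * F = E - F := by linear_combination E * hEF
    calc (1 + γ * (E * E - 1) * (Real.exp ((γ - 1) * u) * K)) * G'
        = G' + γ * (E * E - 1) * (Real.exp ((γ - 1) * u) * G') * K := by ring
      _ = G' + γ * ((E * E - 1) * F) * K := by rw [hWG']; ring
      _ = G' + γ * (E - F) * K := by rw [h3]
  rw [e1, e2] at h6
  rw [Real.sinh_eq, Real.sinh_eq, ← hE, ← hF, ← hG, ← hG']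
  have hKpos : 0 < K := Real.rpow_pos_of_pos (Real.cosh_pos u) _
  nlinarith [h6]

lemma cosh_bound {γ : ℝ} (hγ1 : 1 ≤ γ) (hγ2 : γ ≤ 2) (u : ℝ) :
    Real.cosh (γ * u) + (γ - 1) ≤ γ * Real.cosh u ^ γ := by
  -- reduce to u ≥ 0
  wlog hu : 0 ≤ u with H
  · push_neg at hu
    have := H hγ1 hγ2 (-u) (by linarith)
    rw [Real.cosh_neg] at this
    rwa [show γ * u = -(γ * (-u)) by ring, Real.cosh_neg]
  set ψ : ℝ → ℝ := fun t => γ * Real.cosh t ^ γ - Real.cosh (γ * t) with hψ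
  have key : MonotoneOn ψ (Set.Ici 0) := by
    have hderiv : ∀ t : ℝ, HasDerivAt ψ
        (γ * (γ * Real.cosh t ^ (γ - 1) * Real.sinh t) - Real.sinh (γ * t) * γ) t := by
      intro t
      have h1 : HasDerivAt (fun s : ℝ => Real.cosh s ^ γ)
          (γ * Real.cosh t ^ (γ - 1) * Real.sinh t) t := by
        have := (Real.hasDerivAt_cosh t).rpow_const (p := γ) (Or.inl (Real.cosh_pos t).ne')
        convert this using 1
        ring
      have h2 : HasDerivAt (fun s : ℝ => Real.cosh (γ * s)) (Real.sinh (γ * t) * γ) t := by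
        have hcomp := (Real.hasDerivAt_cosh (γ * t)).comp t ((hasDerivAt_id t).const_mul γ)
        simpa [Function.comp_def] using hcomp
      exact (h1.const_mul γ).sub h2
    apply monotoneOn_of_deriv_nonneg (convex_Ici 0)
    · exact fun t _ => ((hderiv t).differentiableAt).continuousAt.continuousWithinAt
    · exact fun t _ => ((hderiv t).differentiableAt).differentiableWithinAt
    · intro t ht
      rw [interior_Ici] at ht
      replace ht : 0 < t := ht
      rw [(hderiv t).deriv]
      have hs := sinh_bound hγ1 hγ2 ht.le
      nlinarith [hs]
  have h1 : ψ 0 ≤ ψ u := key (by simp) hu hu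
  have hψ0 : ψ 0 = γ - 1 := by simp [hψ, Real.cosh_zero, Real.one_rpow]
  simp only [hψ] at h1 hψ0
  linarith

lemma one_var {γ : ℝ} (hγ1 : 1 ≤ γ) (hγ2 : γ ≤ 2) {x : ℝ} (hx : 0 < x) :
    x ^ γ + 2 * (γ - 1) * x ^ (γ / 2) + 1 ≤ 2 * γ * ((x + 1) / 2) ^ γ := by
  set u := Real.log x / 2 with hu
  set G := Real.exp (γ * u) with hG
  set G' := Real.exp (-(γ * u)) with hG'
  have hGG' : G * G' = 1 := by rw [hG, hG', ← Real.exp_add]; simp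
  have hE2 : Real.exp u * Real.exp u = x := by
    rw [← Real.exp_add, hu]
    rw [show Real.log x / 2 + Real.log x / 2 = Real.log x by ring, Real.exp_log hx]
  have hGsq : G * G = x ^ γ := by
    rw [hG, ← Real.exp_add, Real.rpow_def_of_pos hx, hu]
    ring_nf
  have hGx : G = x ^ (γ / 2) := by
    rw [hG, Real.rpow_def_of_pos hx, hu]
    ring_nf
  have hcoshx : Real.exp u * Real.cosh u = (x + 1) / 2 := by
    rw [Real.cosh_eq]
    have h1 : Real.exp u * Real.exp (-u) = 1 := by rw [← Real.exp_add]; simp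
    nlinarith [hE2, h1]
  have hpow : ((x + 1) / 2) ^ γ = G * Real.cosh u ^ γ := by
    rw [← hcoshx, Real.mul_rpow (Real.exp_pos u).le (Real.cosh_pos u).le, hG, ← Real.exp_mul]
    ring_nf
  have hcoshγ : Real.cosh (γ * u) = (G + G') / 2 := by rw [Real.cosh_eq, hG, hG']
  have hcb := cosh_bound hγ1 hγ2 u
  rw [hcoshγ] at hcb
  have hGpos : (0:ℝ) < G := Real.exp_pos _
  have h6 := mul_le_mul_of_nonneg_right hcb (by positivity : (0:ℝ) ≤ 2 * G)
  calc x ^ γ + 2 * (γ - 1) * x ^ (γ / 2) + 1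
      = (G + G') / 2 * (2 * G) + (γ - 1) * (2 * G) := by
        rw [← hGsq, ← hGx]; nlinarith [hGG']
    _ = ((G + G') / 2 + (γ - 1)) * (2 * G) := by ring
    _ ≤ γ * Real.cosh u ^ γ * (2 * G) := h6
    _ = 2 * γ * ((x + 1) / 2) ^ γ := by rw [hpow]; ring

lemma cs_step {A B U V s2 γ : ℝ} (hA : 0 ≤ A) (hB : 0 ≤ B) (hU : 0 ≤ U) (hV : 0 ≤ V)
    (hs2 : 0 ≤ s2) (hγ : 0 ≤ γ)
    (h1 : A * A + s2 ≤ 2 * γ * (U * U)) (h2 : B * B + s2 ≤ 2 * γ * (V * V)) :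
    A * B + s2 ≤ 2 * γ * U * V := by
  have step1 : (A * B + s2) ^ 2 ≤ (A * A + s2) * (B * B + s2) := by
    nlinarith [mul_nonneg hs2 (sq_nonneg (A - B))]
  have step2 : (A * A + s2) * (B * B + s2) ≤ (2 * γ * (U * U)) * (2 * γ * (V * V)) :=
    mul_le_mul h1 h2 (by positivity) (by positivity)
  have step3 : (A * B + s2) ^ 2 ≤ (2 * γ * U * V) ^ 2 := by nlinarith [step1, step2]
  have hns : 0 ≤ A * B + s2 := by positivity
  have h4 := Real.sqrt_le_sqrt step3
  rwa [Real.sqrt_sq hns, Real.sqrt_sq (by positivity)] at h4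

lemma two_var {δ : ℝ} (hδ0 : 0 < δ) (hδ1 : δ ≤ 1) {x y : ℝ} (hx : 0 < x) (hy : 0 < y) :
    x ^ ((1 + δ) / 2) * y ^ ((1 + δ) / 2) + δ * x ^ ((1 + δ) / 2) + δ * y ^ ((1 + δ) / 2) + 1
      ≤ 2 * (1 + δ) * ((x + 1) / 2) ^ ((1 + δ) / 2) * ((y + 1) / 2) ^ ((1 + δ) / 2) := by
  have hγ1 : (1:ℝ) ≤ 1 + δ := by linarith
  have hγ2 : (1:ℝ) + δ ≤ 2 := by linarith
  have hγC : (1 + δ) / 2 = (1 + δ) / 2 := rfl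
  have hxp : (0:ℝ) < (x + 1) / 2 := by linarith
  have hyp : (0:ℝ) < (y + 1) / 2 := by linarith
  have hxγ : x ^ (1 + δ) = x ^ ((1 + δ) / 2) * x ^ ((1 + δ) / 2) := by
    rw [← Real.rpow_add hx]; ring_nf
  have hyγ : y ^ (1 + δ) = y ^ ((1 + δ) / 2) * y ^ ((1 + δ) / 2) := by
    rw [← Real.rpow_add hy]; ring_nf
  have hxU : ((x + 1) / 2) ^ (1 + δ) = ((x + 1) / 2) ^ ((1 + δ) / 2) * ((x + 1) / 2) ^ ((1 + δ) / 2) := by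
    rw [← Real.rpow_add hxp]; ring_nf
  have hyV : ((y + 1) / 2) ^ (1 + δ) = ((y + 1) / 2) ^ ((1 + δ) / 2) * ((y + 1) / 2) ^ ((1 + δ) / 2) := by
    rw [← Real.rpow_add hyp]; ring_nf
  have hov1 := one_var hγ1 hγ2 hx
  have hov2 := one_var hγ1 hγ2 hy
  rw [show (1 + δ) / 2 = (1+δ)/2 from rfl] at hov1
  rw [hxγ, hxU] at hov1
  rw [hyγ, hyV] at hov2
  have h1 : (x ^ ((1+δ)/2) + δ) * (x ^ ((1+δ)/2) + δ) + (1 - δ^2)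
      ≤ 2 * (1 + δ) * (((x + 1) / 2) ^ ((1+δ)/2) * ((x + 1) / 2) ^ ((1+δ)/2)) := by nlinarith [hov1]
  have h2 : (y ^ ((1+δ)/2) + δ) * (y ^ ((1+δ)/2) + δ) + (1 - δ^2)
      ≤ 2 * (1 + δ) * (((y + 1) / 2) ^ ((1+δ)/2) * ((y + 1) / 2) ^ ((1+δ)/2)) := by nlinarith [hov2]
  have key := cs_step (A := x ^ ((1+δ)/2) + δ) (B := y ^ ((1+δ)/2) + δ)
    (U := ((x + 1) / 2) ^ ((1+δ)/2)) (V := ((y + 1) / 2) ^ ((1+δ)/2)) (s2 := 1 - δ^2)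
    (by positivity) (by positivity) (by positivity) (by positivity)
    (by nlinarith) (by linarith) h1 h2
  nlinarith [key]

lemma gibbs_term {a r : ℝ} (ha : 0 ≤ a) (hr : 0 < r) :
    a * Real.log r - a * Real.log a ≤ r - a := by
  rcases eq_or_lt_of_le ha with h | h
  · simp [← h, hr.le]
  · have hlog : Real.log (r / a) ≤ r / a - 1 := Real.log_le_sub_one_of_pos (by positivity)
    rw [Real.log_div hr.ne' h.ne'] at hlog
    have := mul_le_mul_of_nonneg_left hlog h.le
    calc a * Real.log r - a * Real.log a = a * (Real.log r - Real.log a) := by ring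
      _ ≤ a * (r / a - 1) := this
      _ = r - a := by field_simp

lemma marginal_choice {p : ℝ} (hp0 : 0 ≤ p) (hp1 : p ≤ 1) {ε : ℝ} (hε : 0 < ε) :
    ∃ x : ℝ, 0 < x ∧
      -ε ≤ -(p * Real.log p + (1 - p) * Real.log (1 - p)) + p * Real.log x - Real.log (x + 1) := by
  rcases eq_or_lt_of_le hp0 with h0 | h0
  · refine ⟨ε, hε, ?_⟩
    rw [← h0]
    have : Real.log (ε + 1) ≤ ε := by
      have := Real.log_le_sub_one_of_pos (show (0:ℝ) < ε + 1 by linarith)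
      linarith
    simp
    linarith
  rcases eq_or_lt_of_le hp1 with h1 | h1
  · refine ⟨1 / ε, by positivity, ?_⟩
    rw [h1]
    have he1 : (1:ℝ) / ε + 1 = (1 + ε) / ε := by field_simp
    have e0 : Real.log (1 / ε) = -Real.log ε := by rw [one_div, Real.log_inv]
    have e1 : Real.log (1 / ε + 1) = Real.log (1 + ε) - Real.log ε := by
      rw [he1, Real.log_div (by positivity) hε.ne']
    rw [e0, e1]
    have : Real.log (1 + ε) ≤ ε := by
      have := Real.log_le_sub_one_of_pos (show (0:ℝ) < 1 + ε by linarith)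
      linarith
    simp
    linarith
  · have h1p : (0:ℝ) < 1 - p := by linarith
    refine ⟨p / (1 - p), div_pos h0 h1p, ?_⟩
    have e1 : Real.log (p / (1 - p)) = Real.log p - Real.log (1 - p) :=
      Real.log_div h0.ne' h1p.ne'
    have e2 : p / (1 - p) + 1 = (1 - p)⁻¹ := by field_simp; ring
    rw [e1, e2, Real.log_inv]
    nlinarith [hε]

set_option maxHeartbeats 1000000 in
lemma main_nats {δ a b c d : ℝ} (hδ0 : 0 < δ) (hδ1 : δ ≤ 1)
    (ha : 0 ≤ a) (hb : 0 ≤ b) (hc : 0 ≤ c) (hd : 0 ≤ d) (hsum : a + b + c + d = 1) :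
    0 ≤ (1 + δ) / 2 *
          (-((a + b) * Real.log (a + b) + (1 - (a + b)) * Real.log (1 - (a + b)))
            + -((a + c) * Real.log (a + c) + (1 - (a + c)) * Real.log (1 - (a + c))))
        + (a * Real.log a + b * Real.log b + c * Real.log c + d * Real.log d)
        - Real.log δ * (b + c) + Real.log (1 + δ) - δ * Real.log 2 := by
  have hC0 : (0:ℝ) < (1 + δ) / 2 := by linarith
  have H : ∀ X : ℝ, (∀ ε : ℝ, 0 < ε → -((1 + δ) * ε) ≤ X) → 0 ≤ X := by
    intro X hX'
    by_contra h0
    push_neg at h0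
    have h2 := hX' (-X / (2 * (1 + δ))) (div_pos (by linarith) (by linarith))
    have h3 : (1 + δ) * (-X / (2 * (1 + δ))) = -X / 2 := by
      field_simp
    rw [h3] at h2
    linarith
  apply H
  intro ε hε
  obtain ⟨x, hx, hWx⟩ := marginal_choice (by linarith : (0:ℝ) ≤ a + b) (by linarith) hε
  obtain ⟨y, hy, hWy⟩ := marginal_choice (by linarith : (0:ℝ) ≤ a + c) (by linarith) hε
  have hxC : 0 < x ^ ((1 + δ) / 2) := Real.rpow_pos_of_pos hx _
  have hyC : 0 < y ^ ((1 + δ) / 2) := Real.rpow_pos_of_pos hy _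
  set N := x ^ ((1 + δ) / 2) * y ^ ((1 + δ) / 2) + δ * x ^ ((1 + δ) / 2)
      + δ * y ^ ((1 + δ) / 2) + 1 with hN
  have hNpos : 0 < N := by positivity
  -- Gibbs
  have g1 := gibbs_term ha (show 0 < x ^ ((1+δ)/2) * y ^ ((1+δ)/2) / N by positivity)
  have g2 := gibbs_term hb (show 0 < δ * x ^ ((1+δ)/2) / N by positivity)
  have g3 := gibbs_term hc (show 0 < δ * y ^ ((1+δ)/2) / N by positivity)
  have g4 := gibbs_term hd (show 0 < 1 / N by positivity)
  have hsumr : x ^ ((1+δ)/2) * y ^ ((1+δ)/2) / N + δ * x ^ ((1+δ)/2) / N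
      + δ * y ^ ((1+δ)/2) / N + 1 / N = 1 := by
    field_simp
    rw [hN]; ring
  -- expand the logs of the r's
  have e1 : Real.log (x ^ ((1+δ)/2) * y ^ ((1+δ)/2) / N)
      = (1+δ)/2 * Real.log x + (1+δ)/2 * Real.log y - Real.log N := by
    rw [Real.log_div (by positivity) hNpos.ne', Real.log_mul hxC.ne' hyC.ne',
      Real.log_rpow hx, Real.log_rpow hy]
  have e2 : Real.log (δ * x ^ ((1+δ)/2) / N) = Real.log δ + (1+δ)/2 * Real.log x - Real.log N := by
    rw [Real.log_div (by positivity) hNpos.ne', Real.log_mul hδ0.ne' hxC.ne', Real.log_rpow hx]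
  have e3 : Real.log (δ * y ^ ((1+δ)/2) / N) = Real.log δ + (1+δ)/2 * Real.log y - Real.log N := by
    rw [Real.log_div (by positivity) hNpos.ne', Real.log_mul hδ0.ne' hyC.ne', Real.log_rpow hy]
  have e4 : Real.log (1 / N) = -Real.log N := by
    rw [one_div, Real.log_inv]
  rw [e1] at g1; rw [e2] at g2; rw [e3] at g3; rw [e4] at g4
  -- bound on log N from the two-variable inequality
  have htv := two_var hδ0 hδ1 hx hy
  have hlogN : Real.log N ≤ Real.log 2 + Real.log (1 + δ)
      + (1+δ)/2 * (Real.log (x + 1) - Real.log 2)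
      + (1+δ)/2 * (Real.log (y + 1) - Real.log 2) := by
    have hUp : (0:ℝ) < ((x + 1) / 2) ^ ((1+δ)/2) := Real.rpow_pos_of_pos (by linarith) _
    have hVp : (0:ℝ) < ((y + 1) / 2) ^ ((1+δ)/2) := Real.rpow_pos_of_pos (by linarith) _
    have h5 : Real.log N ≤ Real.log (2 * (1 + δ) * ((x + 1) / 2) ^ ((1+δ)/2)
        * ((y + 1) / 2) ^ ((1+δ)/2)) := Real.log_le_log hNpos (by rw [hN]; linarith [htv])
    rw [Real.log_mul (by positivity) hVp.ne', Real.log_mul (by positivity) hUp.ne',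
      Real.log_mul (by norm_num) (ne_of_gt (by linarith) : (1+δ) ≠ 0),
      Real.log_rpow (by linarith : (0:ℝ) < (x+1)/2), Real.log_rpow (by linarith : (0:ℝ) < (y+1)/2),
      Real.log_div (by linarith : (x+1) ≠ 0) (by norm_num : (2:ℝ) ≠ 0),
      Real.log_div (by linarith : (y+1) ≠ 0) (by norm_num : (2:ℝ) ≠ 0)] at h5
    linarith [h5]
  -- multiply the marginal choices by (1+δ)/2
  have hWxC := mul_le_mul_of_nonneg_left hWx hC0.le
  have hWyC := mul_le_mul_of_nonneg_left hWy hC0.le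
  -- final linear arithmetic
  have hNlog : (a + b + c + d) * Real.log N = Real.log N := by rw [hsum, one_mul]
  linarith [g1, g2, g3, g4, hsumr, hlogN, hWxC, hWyC, hNlog]

set_option maxHeartbeats 1000000

/-- The key single-bit entropy inequality: for a joint distribution `P` on `Bool × Bool`
arising from correlated sets (i.e. `P i j = α i · β j · γ_{ij}` with `γ = 1` on the diagonal
and `γ = δ` off it),
`((1+δ)/2)(H(X)+H(Y)) − H(X,Y) − log₂ δ · Pr[X ≠ Y] + log₂(1+δ) − δ ≥ 0`. -/
theorem single_bit_entropy_inequality (δ : ℝ) (hδ : δ ∈ Set.Ioc (0:ℝ) 1)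
    (P : Bool → Bool → ℝ) (hP : ∀ i j, 0 ≤ P i j)
    (hsum : ∑ i : Bool, ∑ j : Bool, P i j = 1)
    (hstruct : ∃ α β : Bool → ℝ, (∀ i, 0 ≤ α i) ∧ (∀ j, 0 ≤ β j) ∧
      ∀ i j, P i j = α i * β j * (if i = j then 1 else δ)) :
    0 ≤ ((1+δ)/2) *
          ((ent (P false false + P false true) + ent (P true false + P true true))
            + (ent (P false false + P true false) + ent (P false true + P true true)))
        - (∑ i : Bool, ∑ j : Bool, ent (P i j))
        - Real.logb 2 δ * (P false true + P true false)
        + Real.logb 2 (1+δ) - δ := by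
  obtain ⟨hδ0, hδ1⟩ := hδ
  have ha := hP false false
  have hb := hP false true
  have hc := hP true false
  have hd := hP true true
  simp only [Fintype.sum_bool] at hsum ⊢
  have hsum' : P false false + P false true + P true false + P true true = 1 := by linarith
  have key := main_nats hδ0 hδ1 ha hb hc hd hsum'
  have hlog2 : (0:ℝ) < Real.log 2 := Real.log_pos (by norm_num)
  have h1 : P true false + P true true = 1 - (P false false + P false true) := by linarith
  have h2 : P false true + P true true = 1 - (P false false + P true false) := by linarith
  rw [h1, h2]
  simp only [ent, Real.logb]
  rw [← mul_nonneg_iff_of_pos_right hlog2]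
  refine key.trans (le_of_eq ?_)
  field_simp
  ring
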